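/- arXiv:1206.1396 — 2 statements merged into one kernel-verified Lean document; each statement's English description precedes it below -/
import Mathlib

section
/- (Nonnegativity of the potential energy.) For every finitely supported function v : T_q → ℂ, Σ_{(x,y) : d(x,y) = 2} |v(x) − v(y)|² ≥ 2·(q−1)²·Σ_{x} |v(x)|², where the sum on the left is over all ordered pairs (x,y) of vertices at distance 2. Equivalently, (1/(4q))·Σ_{(x,y) : d(x,y)=2} |(v(x)−v(y))/2|² − ((q−1)²/(8q))·Σ_x |v(x)|² ≥ 0. -/
open scoped BigOperators

/-- A homogeneous tree of degree `q + 1`: a connected acyclic simple graph in which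
every vertex has exactly `q + 1` neighbours. Spheres for the graph distance are finite. -/
structure HomTree (q : ℕ) where
  V : Type
  G : SimpleGraph V
  conn : G.Connected
  acyclic : G.IsAcyclic
  sphereFin : ∀ (x : V) (n : ℕ), {y : V | G.dist x y = n}.Finite
  nbrFin : ∀ x : V, {y : V | G.Adj x y}.Finite
  degree : ∀ x : V, (nbrFin x).toFinset.card = q + 1

namespace HomTree

variable {q : ℕ}

/-- The sphere `S(x,n)` as a finite set. -/
noncomputable def sphere (T : HomTree q) (x : T.V) (n : ℕ) : Finset T.V :=
  (T.sphereFin x n).toFinset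

/-- The volume `δ(n)` of spheres. -/
def delta (q n : ℕ) : ℕ := if n = 0 then 1 else (q + 1) * q ^ (n - 1)

/-- The combinatorial Laplacian on the tree. -/
noncomputable def lap (T : HomTree q) (f : T.V → ℂ) (x : T.V) : ℂ :=
  f x - (1 / ((q : ℂ) + 1)) * ∑ y ∈ T.sphere x 1, f y

/-- Spherical means. -/
noncomputable def sphMean (T : HomTree q) (f : T.V → ℂ) (x : T.V) (n : ℕ) : ℂ :=
  (1 / (delta q n : ℂ)) * ∑ y ∈ T.sphere x n, f y

/-- Real powers of `q`, as a complex number. -/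
noncomputable def qpow (q : ℕ) (x : ℝ) : ℂ := (((q : ℝ) ^ x : ℝ) : ℂ)

/-- `γ = 2 / (q^{1/2} + q^{-1/2})`. -/
noncomputable def gam (q : ℕ) : ℝ := 2 / ((q : ℝ) ^ ((1 : ℝ)/2) + (q : ℝ) ^ (-(1 : ℝ)/2))

/-- The combinatorial Laplacian on `ℤ`. -/
noncomputable def lapZ (φ : ℤ → ℂ) (m : ℤ) : ℂ := φ m - (φ (m + 1) + φ (m - 1)) / 2

lemma ball_finite (T : HomTree q) (x : T.V) (n : ℕ) :
    {y : T.V | T.G.dist x y ≤ n}.Finite := by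
  have h : {y : T.V | T.G.dist x y ≤ n} ⊆ ⋃ m ∈ Set.Iic n, {y : T.V | T.G.dist x y = m} := by
    intro y hy
    exact Set.mem_biUnion hy rfl
  exact (((Set.finite_Iic n)).biUnion fun m _ => T.sphereFin x m).subset h

/-- The ball `B(x,n)` as a finite set. -/
noncomputable def ball (T : HomTree q) (x : T.V) (n : ℕ) : Finset T.V :=
  (T.ball_finite x n).toFinset

/-- The operator `M_n` (with `M_n = 0` for `n < 0`). -/
noncomputable def Mop (T : HomTree q) (n : ℤ) (f : T.V → ℂ) (x : T.V) : ℂ :=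
  if 0 ≤ n then
    qpow q (-(n : ℝ) / 2) *
      ∑ y ∈ (T.ball x n.toNat).filter (fun y => (n.toNat - T.G.dist x y) % 2 = 0), f y
  else 0

/-- The operator `C_n = (M_{|n|} - M_{|n|-2})/2`, `C_0 = Id`. -/
noncomputable def Cop (T : HomTree q) (n : ℤ) (f : T.V → ℂ) (x : T.V) : ℂ :=
  if n = 0 then f x else (Mop T |n| f x - Mop T (|n| - 2) f x) / 2

/-- The operator `S_n = sign(n) · M_{|n|-1}`. -/
noncomputable def Sop (T : HomTree q) (n : ℤ) (g : T.V → ℂ) (x : T.V) : ℂ :=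
  (n.sign : ℂ) * Mop T (|n| - 1) g x

/-- `u` solves the shifted wave equation on the tree. -/
def IsWaveSol (T : HomTree q) (u : T.V → ℤ → ℂ) : Prop :=
  ∀ (x : T.V) (n : ℤ),
    u x (n + 1) + u x (n - 1) = qpow q (-(1 : ℝ)/2) * ∑ y ∈ T.sphere x 1, u y n

/-- `u` solves the Cauchy problem for the shifted wave equation with data `f`, `g`. -/
def IsCauchy (T : HomTree q) (f g : T.V → ℂ) (u : T.V → ℤ → ℂ) : Prop :=
  IsWaveSol T u ∧ (∀ x, u x 0 = f x) ∧ ∀ x, (u x 1 - u x (-1)) / 2 = g x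

/-- Kinetic energy. -/
noncomputable def kinetic (T : HomTree q) (u : T.V → ℤ → ℂ) (n : ℤ) : ℝ :=
  (1/2) * ∑' x : T.V, ‖(u x (n + 1) - u x (n - 1)) / 2‖ ^ 2

/-- Potential energy. -/
noncomputable def potential (T : HomTree q) (u : T.V → ℤ → ℂ) (n : ℤ) : ℝ :=
  (1 / (4 * (q : ℝ))) * ∑' p : T.V × T.V,
      (if T.G.dist p.1 p.2 = 2 then ‖(u p.1 n - u p.2 n) / 2‖ ^ 2 else 0)
    - (((q : ℝ) - 1) ^ 2 / (8 * (q : ℝ))) * ∑' x : T.V, ‖u x n‖ ^ 2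

/-- The two-step Laplacian. -/
noncomputable def lap2 (T : HomTree q) (f : T.V → ℂ) (x : T.V) : ℂ :=
  f x - (1 / ((q : ℂ) * ((q : ℂ) + 1))) * ∑ y ∈ T.sphere x 2, f y

end HomTree


set_option linter.unusedSectionVars false

open SimpleGraph

namespace TreeAux

variable {V : Type} [DecidableEq V] {G : SimpleGraph V}

lemma path_eq (hac : G.IsAcyclic) {a b : V} {p q : G.Walk a b}
    (hp : p.IsPath) (hq : q.IsPath) : p = q := by
  have := (SimpleGraph.isAcyclic_iff_path_unique.mp hac) ⟨p, hp⟩ ⟨q, hq⟩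
  exact congrArg Subtype.val this

lemma path_length (hconn : G.Connected) (hac : G.IsAcyclic) {a b : V} {p : G.Walk a b}
    (hp : p.IsPath) : p.length = G.dist a b := by
  obtain ⟨p₀, hp₀, hl⟩ := hconn.exists_path_of_dist a b
  rw [path_eq hac hp hp₀, hl]

lemma dist_le_of_mem_support {a b x : V} (p : G.Walk a b) (hx : x ∈ p.support) :
    G.dist x b ≤ p.length := by
  have h1 : G.dist x b ≤ (p.dropUntil x hx).length := SimpleGraph.dist_le _
  have h2 := congrArg SimpleGraph.Walk.length (p.take_spec hx)
  rw [SimpleGraph.Walk.length_append] at h2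
  omega

lemma step (hconn : G.Connected) (hac : G.IsAcyclic) (o : V) {x y : V} (h : G.Adj x y) :
    G.dist o y + 1 = G.dist o x ∨ G.dist o y = G.dist o x + 1 := by
  obtain ⟨P, hP, hPl⟩ := hconn.exists_path_of_dist o x
  by_cases hy : y ∈ P.support
  · left
    have h1 : G.dist o y ≤ (P.takeUntil y hy).length := SimpleGraph.dist_le _
    have h2 := congrArg SimpleGraph.Walk.length (P.take_spec hy)
    rw [SimpleGraph.Walk.length_append] at h2
    have h3 : (P.dropUntil y hy).length ≠ 0 := by
      intro h0
      exact h.ne' (SimpleGraph.Walk.eq_of_length_eq_zero h0)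
    have ht := hconn.dist_triangle (u := o) (v := y) (w := x)
    have h5 : G.dist y x = 1 := SimpleGraph.dist_eq_one_iff_adj.mpr h.symm
    omega
  · right
    have hR : (P.concat h).IsPath := by
      rw [← SimpleGraph.Walk.reverse_reverse (P.concat h)]
      apply SimpleGraph.Walk.IsPath.reverse
      rw [SimpleGraph.Walk.reverse_concat]
      apply SimpleGraph.Walk.IsPath.cons hP.reverse
      rw [SimpleGraph.Walk.support_reverse]
      simpa using hy
    have hl := path_length hconn hac hR
    rw [SimpleGraph.Walk.length_concat, hPl] at hl
    omega

lemma parent_unique (hconn : G.Connected) (hac : G.IsAcyclic) {o x : V} (hx : x ≠ o)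
    {a b : V} (ha : G.Adj x a) (hda : G.dist o a + 1 = G.dist o x)
    (hb : G.Adj x b) (hdb : G.dist o b + 1 = G.dist o x) : a = b := by
  have hk : 0 < G.dist o x := hconn.pos_dist_of_ne (Ne.symm hx)
  obtain ⟨Pa, hPa, hla⟩ := hconn.exists_path_of_dist a o
  obtain ⟨Pb, hPb, hlb⟩ := hconn.exists_path_of_dist b o
  have hxa : x ∉ Pa.support := by
    intro hmem
    have e1 := dist_le_of_mem_support Pa hmem
    rw [hla] at e1
    rw [SimpleGraph.dist_comm (u := a) (v := o)] at e1
    rw [SimpleGraph.dist_comm (u := x) (v := o)] at e1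
    omega
  have hxb : x ∉ Pb.support := by
    intro hmem
    have e1 := dist_le_of_mem_support Pb hmem
    rw [hlb] at e1
    rw [SimpleGraph.dist_comm (u := b) (v := o)] at e1
    rw [SimpleGraph.dist_comm (u := x) (v := o)] at e1
    omega
  have hca : (SimpleGraph.Walk.cons ha Pa).IsPath := hPa.cons hxa
  have hcb : (SimpleGraph.Walk.cons hb Pb).IsPath := hPb.cons hxb
  have heq := path_eq hac hca hcb
  have hs := congrArg SimpleGraph.Walk.support heq
  rw [SimpleGraph.Walk.support_cons, SimpleGraph.Walk.support_cons,
      SimpleGraph.Walk.support_eq_cons Pa, SimpleGraph.Walk.support_eq_cons Pb] at hs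
  simp only [List.cons.injEq] at hs
  exact hs.2.1

lemma parent_exists (hconn : G.Connected) {o x : V} (hx : x ≠ o) :
    ∃ m, G.Adj x m ∧ G.dist o m + 1 = G.dist o x := by
  obtain ⟨P, hP, hPl⟩ := hconn.exists_path_of_dist o x
  have hk : 0 < G.dist o x := hconn.pos_dist_of_ne (Ne.symm hx)
  obtain ⟨m, h, Q, hQ⟩ := SimpleGraph.Walk.exists_eq_cons_of_ne hx P.reverse
  have hlen : Q.length + 1 = G.dist o x := by
    have := congrArg SimpleGraph.Walk.length hQ
    rw [SimpleGraph.Walk.length_reverse, SimpleGraph.Walk.length_cons, hPl] at this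
    omega
  have h1 : G.dist o m ≤ Q.length := by
    have := SimpleGraph.dist_le Q.reverse
    rwa [SimpleGraph.Walk.length_reverse] at this
  have h2 : G.dist o x ≤ G.dist o m + 1 := by
    have ht := hconn.dist_triangle (u := o) (v := m) (w := x)
    have h5 : G.dist m x = 1 := SimpleGraph.dist_eq_one_iff_adj.mpr h.symm
    omega
  exact ⟨m, h, by omega⟩

lemma dist_two (hconn : G.Connected) (hac : G.IsAcyclic) {m x y : V}
    (hx : G.Adj m x) (hy : G.Adj m y) (hne : x ≠ y) : G.dist x y = 2 := by
  have hpath2 : (SimpleGraph.Walk.cons hx.symm (SimpleGraph.Walk.cons hy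
      SimpleGraph.Walk.nil)).IsPath := by
    apply SimpleGraph.Walk.IsPath.cons
    · apply SimpleGraph.Walk.IsPath.cons SimpleGraph.Walk.IsPath.nil
      simpa using hy.ne
    · simp only [SimpleGraph.Walk.support_cons, SimpleGraph.Walk.support_nil,
        List.mem_cons, List.not_mem_nil, or_false, List.mem_singleton]
      push_neg
      exact ⟨hx.ne', hne⟩
  have hnadj : ¬ G.Adj x y := by
    intro hadj
    have hpath1 : (SimpleGraph.Walk.cons hadj SimpleGraph.Walk.nil).IsPath := by
      apply SimpleGraph.Walk.IsPath.cons SimpleGraph.Walk.IsPath.nil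
      simpa using hne
    have := congrArg SimpleGraph.Walk.length (path_eq hac hpath2 hpath1)
    simp [SimpleGraph.Walk.length_cons] at this
  have hle : G.dist x y ≤ 2 := by
    have := SimpleGraph.dist_le (SimpleGraph.Walk.cons hx.symm
      (SimpleGraph.Walk.cons hy SimpleGraph.Walk.nil))
    simpa using this
  have h0 : 0 < G.dist x y := hconn.pos_dist_of_ne hne
  have h1 : G.dist x y ≠ 1 := by
    rw [ne_eq, SimpleGraph.dist_eq_one_iff_adj]
    exact hnadj
  omega

lemma common_unique (hac : G.IsAcyclic) {x y m m' : V}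
    (h1 : G.Adj m x) (h2 : G.Adj m y) (h3 : G.Adj m' x) (h4 : G.Adj m' y)
    (hxy : x ≠ y) : m = m' := by
  have hp1 : (SimpleGraph.Walk.cons h1.symm (SimpleGraph.Walk.cons h2
      SimpleGraph.Walk.nil)).IsPath := by
    apply SimpleGraph.Walk.IsPath.cons
    · apply SimpleGraph.Walk.IsPath.cons SimpleGraph.Walk.IsPath.nil
      simpa using h2.ne
    · simp only [SimpleGraph.Walk.support_cons, SimpleGraph.Walk.support_nil,
        List.mem_cons, List.not_mem_nil, or_false, List.mem_singleton]
      push_neg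
      exact ⟨h1.ne', hxy⟩
  have hp2 : (SimpleGraph.Walk.cons h3.symm (SimpleGraph.Walk.cons h4
      SimpleGraph.Walk.nil)).IsPath := by
    apply SimpleGraph.Walk.IsPath.cons
    · apply SimpleGraph.Walk.IsPath.cons SimpleGraph.Walk.IsPath.nil
      simpa using h4.ne
    · simp only [SimpleGraph.Walk.support_cons, SimpleGraph.Walk.support_nil,
        List.mem_cons, List.not_mem_nil, or_false, List.mem_singleton]
      push_neg
      exact ⟨h3.ne', hxy⟩
  have heq := path_eq hac hp1 hp2
  have hs := congrArg SimpleGraph.Walk.support heq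
  simp only [SimpleGraph.Walk.support_cons, SimpleGraph.Walk.support_nil,
    List.cons.injEq] at hs
  exact hs.2.1

lemma midpoint_exists {x y : V} (hd : G.dist x y = 2) : ∃ m, G.Adj x m ∧ G.Adj m y := by
  have hne0 : G.dist x y ≠ 0 := by omega
  obtain ⟨P, hPl⟩ := SimpleGraph.exists_walk_of_dist_ne_zero hne0
  have hxy : x ≠ y := by
    intro h
    subst h
    rw [SimpleGraph.dist_self] at hd
    omega
  obtain ⟨m, h, Q, hQ⟩ := SimpleGraph.Walk.exists_eq_cons_of_ne hxy P
  refine ⟨m, h, ?_⟩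
  have hQl : Q.length = 1 := by
    have := congrArg SimpleGraph.Walk.length hQ
    rw [SimpleGraph.Walk.length_cons, hPl, hd] at this
    omega
  exact SimpleGraph.Walk.adj_of_length_eq_one hQl

lemma normSq_add_le (a b : ℂ) :
    Complex.normSq (a + b) ≤ 2 * Complex.normSq a + 2 * Complex.normSq b := by
  rw [← Complex.sq_norm, ← Complex.sq_norm, ← Complex.sq_norm]
  have h1 : ‖a + b‖ ≤ ‖a‖ + ‖b‖ := norm_add_le a b
  have h2 : (0:ℝ) ≤ ‖a + b‖ := norm_nonneg _
  nlinarith [norm_nonneg a, norm_nonneg b, sq_nonneg (‖a‖ - ‖b‖)]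

lemma normSq_sum_le {ι : Type*} (s : Finset ι) (f : ι → ℂ) :
    Complex.normSq (∑ i ∈ s, f i) ≤ (s.card : ℝ) * ∑ i ∈ s, Complex.normSq (f i) := by
  rw [← Complex.sq_norm]
  have h1 : ‖∑ i ∈ s, f i‖ ≤ ∑ i ∈ s, ‖f i‖ :=
    norm_sum_le s f
  have h2 : (‖∑ i ∈ s, f i‖)^2 ≤ (∑ i ∈ s, ‖f i‖)^2 := by
    apply sq_le_sq'
    · linarith [norm_nonneg (∑ i ∈ s, f i)]
    · exact h1
  refine h2.trans ?_
  have := sq_sum_le_card_mul_sum_sq (s := s) (f := fun i => ‖f i‖)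
  simpa [Complex.sq_norm] using this

end TreeAux

lemma exists_outside {q : ℕ} (hq : 2 ≤ q) (T : HomTree q) (B : Finset T.V) :
    ∃ o : T.V, o ∉ B := by
  classical
  by_contra hall
  push_neg at hall
  have hfin : Finite T.V :=
    Set.finite_univ_iff.mp (B.finite_toSet.subset (fun x _ => hall x))
  have : Fintype T.V := Fintype.ofFinite _
  have htree : T.G.IsTree := ⟨T.conn, T.acyclic⟩
  haveI : DecidableRel T.G.Adj := Classical.decRel _
  have hdeg : ∀ x : T.V, T.G.degree x = q + 1 := by
    intro x
    have hset : (T.nbrFin x).toFinset = T.G.neighborFinset x :=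
      Finset.ext (fun y => by simp [Set.Finite.mem_toFinset, SimpleGraph.mem_neighborFinset])
    rw [← T.degree x, hset]
    rfl
  have hsum := T.G.sum_degrees_eq_twice_card_edges
  have hcard := htree.card_edgeFinset
  have hV : 1 ≤ Fintype.card T.V := by
    have : Nonempty T.V := T.conn.nonempty
    exact Fintype.card_pos
  rw [Finset.sum_congr rfl (fun x _ => hdeg x), Finset.sum_const, Finset.card_univ,
    smul_eq_mul] at hsum
  have h3 : 3 * Fintype.card T.V ≤ Fintype.card T.V * (q + 1) := by
    have : 3 ≤ q + 1 := by omega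
    calc 3 * Fintype.card T.V = Fintype.card T.V * 3 := by ring
    _ ≤ Fintype.card T.V * (q + 1) := Nat.mul_le_mul_left _ this
  omega


open TreeAux in
lemma main_normSq {q : ℕ} (hq : 2 ≤ q) (T : HomTree q) (v : T.V → ℂ)
    (hv : (Function.support v).Finite) :
    2 * ((q : ℝ) - 1) ^ 2 * ∑' x : T.V, Complex.normSq (v x) ≤
    ∑' p : T.V × T.V,
      (if T.G.dist p.1 p.2 = 2 then Complex.normSq (v p.1 - v p.2) else 0) := by
  classical
  have hconn := T.conn
  have hac := T.acyclic
  set S : Finset T.V := hv.toFinset with hS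
  have hSmem : ∀ x, x ∈ S ↔ v x ≠ 0 := fun x => by
    simp [hS, Set.Finite.mem_toFinset, Function.mem_support]
  set N : T.V → Finset T.V := fun m => (T.nbrFin m).toFinset with hNdef
  have hN : ∀ m y, y ∈ N m ↔ T.G.Adj m y := fun m y => by
    simp [hNdef, Set.Finite.mem_toFinset]
  have hNcard : ∀ m, (N m).card = q + 1 := T.degree
  set B3 : Finset T.V := S.biUnion (fun s => T.ball s 3) with hB3def
  have hB3 : ∀ m, m ∈ B3 ↔ ∃ s ∈ S, T.G.dist s m ≤ 3 := by
    intro m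
    simp [hB3def, Finset.mem_biUnion, HomTree.ball, Set.Finite.mem_toFinset]
  obtain ⟨o, ho⟩ := exists_outside hq T B3
  have hSB3 : ∀ s ∈ S, s ∈ B3 := fun s hs =>
    (hB3 s).mpr ⟨s, hs, by simp [SimpleGraph.dist_self]⟩
  have hSo : ∀ s ∈ S, s ≠ o := fun s hs he => ho (he ▸ hSB3 s hs)
  have hB3o : ∀ m ∈ B3, m ≠ o := fun m hm he => ho (he ▸ hm)
  have hparEx : ∀ x, x ≠ o → ∃ m, T.G.Adj x m ∧ T.G.dist o m + 1 = T.G.dist o x :=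
    fun x hx => parent_exists hconn hx
  set par : T.V → T.V := fun x => if h : x ≠ o then (hparEx x h).choose else x with hpardef
  have hpar : ∀ x, (h : x ≠ o) → T.G.Adj x (par x) ∧ T.G.dist o (par x) + 1 = T.G.dist o x := by
    intro x h
    simp only [hpardef, dif_pos h]
    exact (hparEx x h).choose_spec
  have hparU : ∀ x, (h : x ≠ o) → ∀ m, T.G.Adj x m → T.G.dist o m + 1 = T.G.dist o x →
      m = par x :=
    fun x h m hm hd => parent_unique hconn hac h hm hd (hpar x h).1 (hpar x h).2
  set F : T.V → ℝ := fun x => Complex.normSq (v x) with hFdef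
  have hF0 : ∀ x, x ∉ S → F x = 0 := by
    intro x hx
    have hvx : v x = 0 := by
      by_contra h
      exact hx ((hSmem x).mpr h)
    simp [hFdef, hvx]
  have hFnn : ∀ x, 0 ≤ F x := fun x => Complex.normSq_nonneg _
  set c : T.V → ℂ := fun m => ∑ y ∈ N m, v y with hcdef
  set Pm : T.V → Finset (T.V × T.V) :=
    fun m => ((N m) ×ˢ (N m)).filter (fun p => p.1 ≠ p.2) with hPmdef
  set f : T.V × T.V → ℝ :=
    fun p => if T.G.dist p.1 p.2 = 2 then Complex.normSq (v p.1 - v p.2) else 0 with hfdef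
  -- disjointness of the pair-sets
  have hdisj : (↑B3 : Set T.V).PairwiseDisjoint Pm := by
    intro m₁ h₁ m₂ h₂ hne
    simp only [Function.onFun]
    rw [Finset.disjoint_left]
    intro p hp1 hp2
    simp only [hPmdef, Finset.mem_filter, Finset.mem_product] at hp1 hp2
    exact hne (common_unique hac ((hN _ _).mp hp1.1.1) ((hN _ _).mp hp1.1.2)
      ((hN _ _).mp hp2.1.1) ((hN _ _).mp hp2.1.2) hp1.2)
  set U : Finset (T.V × T.V) := B3.biUnion Pm with hUdef
  have hfU : ∀ p, p ∉ U → f p = 0 := by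
    intro p hp
    by_contra hne
    simp only [hfdef] at hne
    have hd : T.G.dist p.1 p.2 = 2 := by
      by_contra h
      simp [h] at hne
    rw [if_pos hd] at hne
    have hvne : v p.1 ≠ v p.2 := by
      intro h
      rw [h] at hne
      simp at hne
    obtain ⟨m, hm1, hm2⟩ := midpoint_exists hd
    have hmB3 : m ∈ B3 := by
      rcases (by
        by_contra hcon
        push_neg at hcon
        exact hvne (hcon.1.trans hcon.2.symm) : v p.1 ≠ 0 ∨ v p.2 ≠ 0) with h | h
      · refine (hB3 m).mpr ⟨p.1, (hSmem _).mpr h, ?_⟩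
        rw [SimpleGraph.dist_eq_one_iff_adj.mpr hm1]
        omega
      · refine (hB3 m).mpr ⟨p.2, (hSmem _).mpr h, ?_⟩
        rw [SimpleGraph.dist_eq_one_iff_adj.mpr hm2.symm]
        omega
    apply hp
    rw [hUdef, Finset.mem_biUnion]
    refine ⟨m, hmB3, ?_⟩
    simp only [hPmdef, Finset.mem_filter, Finset.mem_product]
    have hp12 : p.1 ≠ p.2 := by
      intro h
      rw [h, SimpleGraph.dist_self] at hd
      omega
    exact ⟨⟨(hN m p.1).mpr hm1.symm, (hN m p.2).mpr hm2⟩, hp12⟩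
  have hUf : ∀ p ∈ U, f p = Complex.normSq (v p.1 - v p.2) := by
    intro p hp
    rw [hUdef, Finset.mem_biUnion] at hp
    obtain ⟨m, hm, hpm⟩ := hp
    simp only [hPmdef, Finset.mem_filter, Finset.mem_product] at hpm
    have hd : T.G.dist p.1 p.2 = 2 :=
      dist_two hconn hac ((hN _ _).mp hpm.1.1) ((hN _ _).mp hpm.1.2) hpm.2
    simp [hfdef, hd]
  have hA : ∑' p : T.V × T.V, f p
      = ∑ m ∈ B3, ∑ p ∈ Pm m, Complex.normSq (v p.1 - v p.2) := by
    rw [tsum_eq_sum hfU, Finset.sum_congr rfl hUf, hUdef, Finset.sum_biUnion hdisj]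
  -- expansion of the inner double sum
  have hK2 : ∀ m, ∑ p ∈ Pm m, Complex.normSq (v p.1 - v p.2)
      = 2 * ((q:ℝ)+1) * (∑ x ∈ N m, F x) - 2 * Complex.normSq (c m) := by
    intro m
    have e1 : ∑ p ∈ Pm m, Complex.normSq (v p.1 - v p.2)
        = ∑ x ∈ N m, ∑ y ∈ N m, Complex.normSq (v x - v y) := by
      simp only [hPmdef]
      rw [Finset.sum_filter, Finset.sum_product]
      refine Finset.sum_congr rfl fun x _ => Finset.sum_congr rfl fun y _ => ?_
      by_cases hxy : x = y
      · subst hxy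
        simp
      · simp [hxy]
    have e3 : ∀ x, ∑ y ∈ N m, Complex.normSq (v x - v y)
        = ((q:ℝ)+1) * F x + (∑ y ∈ N m, F y)
          - 2 * (v x * (starRingEnd ℂ) (c m)).re := by
      intro x
      simp only [Complex.normSq_sub]
      rw [Finset.sum_sub_distrib, Finset.sum_add_distrib, Finset.sum_const, hNcard m,
        nsmul_eq_mul, ← Finset.mul_sum, ← Complex.re_sum, ← Finset.mul_sum,
        ← map_sum (starRingEnd ℂ) v (N m)]
      push_cast
      simp only [hFdef, hcdef]
    have hre : ∑ x ∈ N m, 2 * (v x * (starRingEnd ℂ) (c m)).re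
        = 2 * Complex.normSq (c m) := by
      rw [← Finset.mul_sum]
      congr 1
      rw [← Complex.re_sum, ← Finset.sum_mul]
      show ((c m) * (starRingEnd ℂ) (c m)).re = _
      rw [Complex.mul_conj]
      simp
    rw [e1, Finset.sum_congr rfl fun x _ => e3 x]
    rw [Finset.sum_sub_distrib, Finset.sum_add_distrib, Finset.sum_const, hNcard m,
      nsmul_eq_mul, hre, ← Finset.mul_sum]
    push_cast
    ring
  -- counting neighbours
  have hK3 : ∑ m ∈ B3, ∑ x ∈ N m, F x = ((q:ℝ)+1) * ∑ x ∈ S, F x := by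
    have inner : ∀ m, ∑ x ∈ N m, F x = ∑ x ∈ S, if x ∈ N m then F x else 0 := by
      intro m
      rw [Finset.sum_ite_mem]
      exact (Finset.sum_subset Finset.inter_subset_right
        (fun x hx hnx => hF0 x (fun hxS => hnx (Finset.mem_inter.mpr ⟨hxS, hx⟩)))).symm
    rw [Finset.sum_congr rfl fun m _ => inner m, Finset.sum_comm, Finset.mul_sum]
    refine Finset.sum_congr rfl fun x hx => ?_
    rw [← Finset.sum_filter]
    have hfilter : B3.filter (fun m => x ∈ N m) = N x := by
      ext m
      simp only [Finset.mem_filter]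
      constructor
      · rintro ⟨-, h⟩
        exact (hN x m).mpr ((hN m x).mp h).symm
      · intro h
        have hadj := (hN x m).mp h
        refine ⟨(hB3 m).mpr ⟨x, hx, ?_⟩, (hN m x).mpr hadj.symm⟩
        rw [SimpleGraph.dist_eq_one_iff_adj.mpr hadj]
        omega
    rw [hfilter, Finset.sum_const, hNcard, nsmul_eq_mul]
    push_cast
    ring
  -- pointwise bound on normSq (c m)
  have hK4 : ∀ m ∈ B3, Complex.normSq (c m)
      ≤ 2 * F (par m) + 2 * (q:ℝ) * ∑ y ∈ (N m).erase (par m), F y := by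
    intro m hm
    have hmo := hB3o m hm
    have hpm := hpar m hmo
    have hparN : par m ∈ N m := (hN m (par m)).mpr hpm.1
    have hsplit : c m = v (par m) + ∑ y ∈ (N m).erase (par m), v y := by
      simp only [hcdef]
      exact (Finset.add_sum_erase _ _ hparN).symm
    rw [hsplit]
    refine (normSq_add_le _ _).trans ?_
    have hcs := normSq_sum_le ((N m).erase (par m)) v
    have hcard : ((N m).erase (par m)).card = q := by
      rw [Finset.card_erase_of_mem hparN, hNcard]
      omega
    rw [hcard] at hcs
    have h2 : 2 * Complex.normSq (∑ y ∈ (N m).erase (par m), v y)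
        ≤ 2 * ((q:ℝ) * ∑ y ∈ (N m).erase (par m), F y) := by
      have := hcs
      simp only [hFdef]
      linarith
    simp only [hFdef] at *
    linarith
  -- parent counting
  have hK5 : ∑ m ∈ B3, F (par m) ≤ (q:ℝ) * ∑ y ∈ S, F y := by
    have inner : ∀ m ∈ B3, F (par m) = ∑ y ∈ S, if y = par m then F y else 0 := by
      intro m _
      rw [Finset.sum_ite_eq' S (par m) F]
      by_cases h : par m ∈ S
      · simp [h]
      · simp [h, hF0 _ h]
    rw [Finset.sum_congr rfl inner, Finset.sum_comm, Finset.mul_sum]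
    refine Finset.sum_le_sum fun y hy => ?_
    rw [← Finset.sum_filter, Finset.sum_const, nsmul_eq_mul]
    have hyo := hSo y hy
    have hpy := hpar y hyo
    have hsub : B3.filter (fun m => y = par m) ⊆ (N y).erase (par y) := by
      intro m hmf
      simp only [Finset.mem_filter] at hmf
      obtain ⟨hmB, hym⟩ := hmf
      have hmo := hB3o m hmB
      have hpmm := hpar m hmo
      rw [← hym] at hpmm
      refine Finset.mem_erase.mpr ⟨?_, (hN y m).mpr hpmm.1.symm⟩
      intro he
      rw [he] at hpmm
      have := hpy.2
      omega
    have hcard : ((B3.filter (fun m => y = par m)).card : ℝ) ≤ (q:ℝ) := by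
      have h1 : (B3.filter (fun m => y = par m)).card ≤ q := by
        refine le_trans (Finset.card_le_card hsub) ?_
        rw [Finset.card_erase_of_mem ((hN y (par y)).mpr hpy.1), hNcard]
        omega
      exact_mod_cast h1
    exact mul_le_mul_of_nonneg_right hcard (hFnn y)
  -- child counting
  have hK6 : ∑ m ∈ B3, ∑ y ∈ (N m).erase (par m), F y ≤ ∑ y ∈ S, F y := by
    have inner : ∀ m ∈ B3, ∑ y ∈ (N m).erase (par m), F y
        = ∑ y ∈ S, if y ∈ (N m).erase (par m) then F y else 0 := by
      intro m _
      rw [Finset.sum_ite_mem]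
      exact (Finset.sum_subset Finset.inter_subset_right
        (fun x hx hnx => hF0 x (fun hxS => hnx (Finset.mem_inter.mpr ⟨hxS, hx⟩)))).symm
    rw [Finset.sum_congr rfl inner, Finset.sum_comm]
    refine Finset.sum_le_sum fun y hy => ?_
    rw [← Finset.sum_filter, Finset.sum_const, nsmul_eq_mul]
    have hyo := hSo y hy
    have hone : ∀ m ∈ B3.filter (fun m => y ∈ (N m).erase (par m)), m = par y := by
      intro m hmf
      simp only [Finset.mem_filter, Finset.mem_erase] at hmf
      obtain ⟨hmB, hyne, hyN⟩ := hmf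
      have hmo := hB3o m hmB
      have hadj : T.G.Adj m y := (hN m y).mp hyN
      rcases step hconn hac o hadj with hcase | hcase
      · exact absurd (hparU m hmo y hadj hcase) hyne
      · exact hparU y hyo m hadj.symm (by omega)
    have hcard : ((B3.filter (fun m => y ∈ (N m).erase (par m))).card : ℝ) ≤ 1 := by
      have h1 : (B3.filter (fun m => y ∈ (N m).erase (par m))).card ≤ 1 :=
        Finset.card_le_one.mpr fun m1 hm1 m2 hm2 => by rw [hone m1 hm1, hone m2 hm2]
      exact_mod_cast h1
    calc ((B3.filter (fun m => y ∈ (N m).erase (par m))).card : ℝ) * F y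
        ≤ 1 * F y := mul_le_mul_of_nonneg_right hcard (hFnn y)
      _ = F y := one_mul _
  have hSnn : 0 ≤ ∑ x ∈ S, F x := Finset.sum_nonneg fun x _ => hFnn x
  have hc4 : ∑ m ∈ B3, Complex.normSq (c m) ≤ 4 * (q:ℝ) * ∑ x ∈ S, F x := by
    calc ∑ m ∈ B3, Complex.normSq (c m)
        ≤ ∑ m ∈ B3, (2 * F (par m) + 2 * (q:ℝ) * ∑ y ∈ (N m).erase (par m), F y) :=
          Finset.sum_le_sum hK4
      _ = 2 * (∑ m ∈ B3, F (par m))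
          + 2 * (q:ℝ) * ∑ m ∈ B3, ∑ y ∈ (N m).erase (par m), F y := by
          rw [Finset.sum_add_distrib, Finset.mul_sum, Finset.mul_sum]
      _ ≤ 2 * ((q:ℝ) * ∑ y ∈ S, F y) + 2 * (q:ℝ) * ∑ y ∈ S, F y := by
          have hq0 : (0:ℝ) ≤ 2 * (q:ℝ) := by positivity
          have := mul_le_mul_of_nonneg_left hK6 hq0
          have := mul_le_mul_of_nonneg_left hK5 (by norm_num : (0:ℝ) ≤ 2)
          linarith
      _ = 4 * (q:ℝ) * ∑ x ∈ S, F x := by ring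
  have hSsum : ∑' x : T.V, Complex.normSq (v x) = ∑ x ∈ S, F x :=
    tsum_eq_sum (fun x hx => hF0 x hx)
  have hgoal : (∑' p : T.V × T.V, f p) ≥ 2 * ((q:ℝ) - 1)^2 * ∑ x ∈ S, F x := by
    rw [hA, Finset.sum_congr rfl fun m _ => hK2 m, Finset.sum_sub_distrib,
      ← Finset.mul_sum, ← Finset.mul_sum, hK3]
    have hq' : (2:ℝ) ≤ (q:ℝ) := by exact_mod_cast hq
    nlinarith [hc4, hSnn]
  rw [hSsum]
  exact hgoal

open HomTree in
/-- nonnegativity of the potential energy. -/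
theorem stmt13 {q : ℕ} (hq : 2 ≤ q) (T : HomTree q) (v : T.V → ℂ)
    (hv : (Function.support v).Finite) :
    (∑' p : T.V × T.V,
        (if T.G.dist p.1 p.2 = 2 then ‖v p.1 - v p.2‖ ^ 2 else 0)) ≥
      2 * ((q : ℝ) - 1) ^ 2 * ∑' x : T.V, ‖v x‖ ^ 2 ∧
    0 ≤ (1 / (4 * (q : ℝ))) * ∑' p : T.V × T.V,
          (if T.G.dist p.1 p.2 = 2 then ‖(v p.1 - v p.2) / 2‖ ^ 2 else 0)
        - (((q : ℝ) - 1) ^ 2 / (8 * (q : ℝ))) * ∑' x : T.V, ‖v x‖ ^ 2 := by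
  constructor
  · have h := main_normSq hq T v hv
    have e1 : (∑' p : T.V × T.V,
          (if T.G.dist p.1 p.2 = 2 then ‖v p.1 - v p.2‖ ^ 2 else 0))
        = ∑' p : T.V × T.V,
          (if T.G.dist p.1 p.2 = 2 then Complex.normSq (v p.1 - v p.2) else 0) :=
      tsum_congr fun p => by
        by_cases hd : T.G.dist p.1 p.2 = 2 <;> simp [hd, Complex.sq_norm]
    have e2 : (∑' x : T.V, ‖v x‖ ^ 2) = ∑' x : T.V, Complex.normSq (v x) :=
      tsum_congr fun x => Complex.sq_norm _
    rw [ge_iff_le, e1, e2]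
    exact h
  · have h := main_normSq hq T v hv
    have e2 : (∑' x : T.V, ‖v x‖ ^ 2) = ∑' x : T.V, Complex.normSq (v x) :=
      tsum_congr fun x => Complex.sq_norm _
    have e3 : (∑' p : T.V × T.V,
          (if T.G.dist p.1 p.2 = 2 then ‖(v p.1 - v p.2) / 2‖ ^ 2 else 0))
        = (1/4) * ∑' p : T.V × T.V,
          (if T.G.dist p.1 p.2 = 2 then Complex.normSq (v p.1 - v p.2) else 0) := by
      rw [← tsum_mul_left]
      refine tsum_congr fun p => ?_
      by_cases hd : T.G.dist p.1 p.2 = 2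
      · simp only [hd, if_true, Complex.sq_norm, Complex.normSq_div]
        have h2 : Complex.normSq 2 = 4 := by
          rw [← Complex.sq_norm, Complex.norm_two]
          norm_num
        rw [h2]
        ring
      · simp [hd]
    rw [e2, e3]
    set A := ∑' p : T.V × T.V,
      (if T.G.dist p.1 p.2 = 2 then Complex.normSq (v p.1 - v p.2) else 0) with hAdef
    set B := ∑' x : T.V, Complex.normSq (v x) with hBdef
    have hBnn : 0 ≤ B := tsum_nonneg fun x => Complex.normSq_nonneg _
    have hq' : (2:ℝ) ≤ (q:ℝ) := by exact_mod_cast hq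
    have hqpos : (0:ℝ) < (q:ℝ) := by linarith
    have key : 2 * ((q:ℝ) - 1)^2 * B ≤ A := h
    have e4 : 1 / (4 * (q:ℝ)) * (1/4 * A) = 1/(16*(q:ℝ)) * A := by
      ring
    have e5 : ((q:ℝ) - 1)^2 / (8 * (q:ℝ)) * B = 1/(16*(q:ℝ)) * (2 * ((q:ℝ)-1)^2 * B) := by
      ring
    rw [e4, e5, sub_nonneg]
    apply mul_le_mul_of_nonneg_left key
    positivity
end

section
/- (Conservation of energy.) Let u solve the Cauchy problem for the shifted wave equation on T_q with finitely supported data f, g : T_q → ℂ (so that each function u(·,n) is finitely supported). Then the total energy E(n) = K(n) + P(n) is independent of n ∈ ℤ: E(n) = E(0) for all n. -/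
open scoped BigOperators

attribute [local instance] Classical.propDecidable

namespace HomTree

variable {q : ℕ} (T : HomTree q)

lemma mem_sphere_iff {x y : T.V} {n : ℕ} : y ∈ T.sphere x n ↔ T.G.dist x y = n :=
  Set.Finite.mem_toFinset _

lemma sphere_one_card (x : T.V) : (T.sphere x 1).card = q + 1 := by
  have h : T.sphere x 1 = (T.nbrFin x).toFinset := by
    ext y
    simp [mem_sphere_iff, Set.Finite.mem_toFinset, SimpleGraph.dist_eq_one_iff_adj]
  rw [h, T.degree]

lemma mid_unique {x y y' z : T.V} (hz : z ≠ x)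
    (h1 : T.G.Adj x y) (h2 : T.G.Adj y z) (h3 : T.G.Adj x y') (h4 : T.G.Adj y' z) :
    y = y' := by
  have hpu := SimpleGraph.isAcyclic_iff_path_unique.mp T.acyclic
  have hw : (SimpleGraph.Walk.cons h1 (SimpleGraph.Walk.cons h2 SimpleGraph.Walk.nil) :
      T.G.Walk x z) = SimpleGraph.Walk.cons h3 (SimpleGraph.Walk.cons h4 SimpleGraph.Walk.nil) :=
    congrArg Subtype.val (hpu
      ⟨SimpleGraph.Walk.cons h1 (SimpleGraph.Walk.cons h2 SimpleGraph.Walk.nil), by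
        simp [SimpleGraph.Walk.isPath_def, h1.ne, h2.ne, hz.symm]⟩
      ⟨SimpleGraph.Walk.cons h3 (SimpleGraph.Walk.cons h4 SimpleGraph.Walk.nil), by
        simp [SimpleGraph.Walk.isPath_def, h3.ne, h4.ne, hz.symm]⟩)
  have hsupp := congrArg SimpleGraph.Walk.support hw
  simp [SimpleGraph.Walk.support_cons] at hsupp
  exact hsupp

lemma dist_eq_two {x y z : T.V} (h1 : T.G.Adj x y) (h2 : T.G.Adj y z) (hz : z ≠ x) :
    T.G.dist x z = 2 := by
  have hle : T.G.dist x z ≤ 2 := by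
    have := SimpleGraph.dist_le (SimpleGraph.Walk.cons h1 (SimpleGraph.Walk.cons h2 SimpleGraph.Walk.nil))
    simpa using this
  have h0 : T.G.dist x z ≠ 0 := by
    intro h
    rw [T.conn.dist_eq_zero_iff] at h
    exact hz h.symm
  have hne1 : T.G.dist x z ≠ 1 := by
    intro h
    have hadj : T.G.Adj x z := SimpleGraph.dist_eq_one_iff_adj.mp h
    have hpu := SimpleGraph.isAcyclic_iff_path_unique.mp T.acyclic
    have hw : (SimpleGraph.Walk.cons hadj SimpleGraph.Walk.nil : T.G.Walk x z)
        = SimpleGraph.Walk.cons h1 (SimpleGraph.Walk.cons h2 SimpleGraph.Walk.nil) :=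
      congrArg Subtype.val (hpu
        ⟨SimpleGraph.Walk.cons hadj SimpleGraph.Walk.nil, by
          simp [SimpleGraph.Walk.isPath_def, hadj.ne]⟩
        ⟨SimpleGraph.Walk.cons h1 (SimpleGraph.Walk.cons h2 SimpleGraph.Walk.nil), by
          simp [SimpleGraph.Walk.isPath_def, h1.ne, h2.ne, hz.symm]⟩)
    have hlen := congrArg SimpleGraph.Walk.length hw
    simp [SimpleGraph.Walk.length_cons] at hlen
  omega

lemma exists_mid {x z : T.V} (h : T.G.dist x z = 2) :
    ∃ y, T.G.Adj x y ∧ T.G.Adj y z := by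
  have hr : T.G.Reachable x z := T.conn.preconnected x z
  obtain ⟨p, hp⟩ := hr.exists_walk_length_eq_dist
  rw [h] at hp
  cases p with
  | nil => simp at hp
  | @cons _ y₀ _ h1 p' =>
    cases p' with
    | nil => simp at hp
    | @cons _ b _ h2 p'' =>
      have hlen : p''.length = 0 := by
        simp only [SimpleGraph.Walk.length_cons] at hp; omega
      have hb : b = z := SimpleGraph.Walk.eq_of_length_eq_zero hlen
      subst hb
      exact ⟨y₀, h1, h2⟩

lemma sphere_two_eq (x : T.V) [DecidableEq T.V] :
    T.sphere x 2 = (T.sphere x 1).biUnion (fun y => (T.sphere y 1).erase x) := by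
  ext z
  simp only [Finset.mem_biUnion, Finset.mem_erase, mem_sphere_iff]
  constructor
  · intro h
    obtain ⟨y, hxy, hyz⟩ := T.exists_mid h
    refine ⟨y, SimpleGraph.dist_eq_one_iff_adj.mpr hxy, ?_, SimpleGraph.dist_eq_one_iff_adj.mpr hyz⟩
    intro hzx
    subst hzx
    simp [SimpleGraph.dist_self] at h
  · rintro ⟨y, hxy, hzx, hyz⟩
    exact T.dist_eq_two (SimpleGraph.dist_eq_one_iff_adj.mp hxy)
      (SimpleGraph.dist_eq_one_iff_adj.mp hyz) hzx

lemma sphere_pairwise_disj (x : T.V) [DecidableEq T.V] :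
    (↑(T.sphere x 1) : Set T.V).PairwiseDisjoint (fun y => (T.sphere y 1).erase x) := by
  intro a ha b hb hab
  simp only [Function.onFun]
  rw [Finset.disjoint_left]
  intro z hz1 hz2
  simp only [Finset.mem_erase, mem_sphere_iff] at hz1 hz2
  simp only [Finset.mem_coe, mem_sphere_iff] at ha hb
  exact hab (T.mid_unique hz1.1 (SimpleGraph.dist_eq_one_iff_adj.mp ha)
    (SimpleGraph.dist_eq_one_iff_adj.mp hz1.2) (SimpleGraph.dist_eq_one_iff_adj.mp hb)
    (SimpleGraph.dist_eq_one_iff_adj.mp hz2.2))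

lemma sum_sphere_two (x : T.V) (f : T.V → ℂ) :
    ∑ z ∈ T.sphere x 2, f z
      = (∑ y ∈ T.sphere x 1, ∑ z ∈ T.sphere y 1, f z) - (q + 1 : ℂ) * f x := by
  classical
  rw [T.sphere_two_eq x, Finset.sum_biUnion (T.sphere_pairwise_disj x)]
  have h : ∀ y ∈ T.sphere x 1,
      ∑ z ∈ (T.sphere y 1).erase x, f z = (∑ z ∈ T.sphere y 1, f z) - f x := by
    intro y hy
    rw [Finset.sum_erase_eq_sub]
    rw [mem_sphere_iff]
    rw [mem_sphere_iff] at hy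
    rw [SimpleGraph.dist_comm]
    exact hy
  rw [Finset.sum_congr rfl h, Finset.sum_sub_distrib, Finset.sum_const, T.sphere_one_card x]
  push_cast [nsmul_eq_mul]
  ring

lemma sphere_two_card (x : T.V) : (T.sphere x 2).card = q * q + q := by
  have h := T.sum_sphere_two x (fun _ => (1 : ℂ))
  simp only [Finset.sum_const, T.sphere_one_card, nsmul_eq_mul, mul_one] at h
  have : ((T.sphere x 2).card : ℂ) = (q * q + q : ℕ) := by
    rw [h]; push_cast; ring
  exact_mod_cast this

lemma sum_sphere_eq_filter {M : Type*} [AddCommMonoid M] (t : Finset T.V) (x : T.V) (r : ℕ)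
    (g : T.V → M) (h : ∀ y, T.G.dist x y = r → g y ≠ 0 → y ∈ t) [DecidableEq T.V]
    [DecidablePred fun y => T.G.dist x y = r] :
    ∑ y ∈ T.sphere x r, g y = ∑ y ∈ t.filter (fun y => T.G.dist x y = r), g y := by
  refine (Finset.sum_subset ?_ ?_).symm
  · intro y hy
    rw [Finset.mem_filter] at hy
    rw [mem_sphere_iff]
    exact hy.2
  · intro y hy hyn
    rw [mem_sphere_iff] at hy
    by_contra hne
    exact hyn (Finset.mem_filter.mpr ⟨h y hy hne, hy⟩)

lemma sum_sphere_swap (t : Finset T.V) (r : ℕ) (F : T.V → T.V → ℝ)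
    (h1 : ∀ x ∈ t, ∀ y, T.G.dist x y = r → y ∉ t → F x y = 0)
    (h2 : ∀ y ∈ t, ∀ x, T.G.dist x y = r → x ∉ t → F x y = 0) :
    ∑ x ∈ t, ∑ y ∈ T.sphere x r, F x y = ∑ y ∈ t, ∑ x ∈ T.sphere y r, F x y := by
  classical
  have L : ∀ x ∈ t, ∑ y ∈ T.sphere x r, F x y
      = ∑ y ∈ t, if T.G.dist x y = r then F x y else 0 := by
    intro x hx
    rw [T.sum_sphere_eq_filter t x r (F x) (fun y hd hne => by
      by_contra hyn
      exact hne (h1 x hx y hd hyn)), Finset.sum_filter]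
  have R : ∀ y ∈ t, ∑ x ∈ T.sphere y r, F x y
      = ∑ x ∈ t, if T.G.dist x y = r then F x y else 0 := by
    intro y hy
    rw [T.sum_sphere_eq_filter t y r (fun x => F x y) (fun x hd hne => by
      by_contra hxn
      exact hne (h2 y hy x (by rw [SimpleGraph.dist_comm]; exact hd) hxn)), Finset.sum_filter]
    refine Finset.sum_congr rfl fun x _ => ?_
    rw [SimpleGraph.dist_comm]
  rw [Finset.sum_congr rfl L, Finset.sum_congr rfl R, Finset.sum_comm]

/-- Key identity evaluating the distance-2 pair sum. -/
lemma key_identity (hq : 0 < q) (v : T.V → ℂ) (s t : Finset T.V)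
    (hsupp : ∀ x, v x ≠ 0 → x ∈ s) (hst : s ⊆ t)
    (ht2 : ∀ x ∈ s, ∀ y, T.G.dist x y ≤ 2 → y ∈ t) :
    ∑ x ∈ t, ∑ y ∈ t, (if T.G.dist x y = 2 then Complex.normSq (v x - v y) else 0)
      = 2 * ((q : ℝ) + 1) ^ 2 * ∑ x ∈ t, Complex.normSq (v x)
        - 2 * ∑ x ∈ t, Complex.normSq (∑ y ∈ T.sphere x 1, v y) := by
  classical
  have hv0 : ∀ x, x ∉ t → v x = 0 := fun x hx => by
    by_contra hne; exact hx (hst (hsupp x hne))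
  have hfull : ∀ x ∈ s, t.filter (fun y => T.G.dist x y = 2) = T.sphere x 2 := by
    intro x hx
    ext y
    simp only [Finset.mem_filter, mem_sphere_iff]
    exact ⟨fun h => h.2, fun h => ⟨ht2 x hx y h.le, h⟩⟩
  -- split the summand
  have hsplit : ∀ x ∈ t, ∀ y ∈ t,
      (if T.G.dist x y = 2 then Complex.normSq (v x - v y) else 0)
        = (if T.G.dist x y = 2 then Complex.normSq (v x) else 0)
          + (if T.G.dist x y = 2 then Complex.normSq (v y) else 0)
          - 2 * (if T.G.dist x y = 2 then (v x * (starRingEnd ℂ) (v y)).re else 0) := by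
    intro x _ y _
    by_cases h : T.G.dist x y = 2 <;> simp [h, Complex.normSq_sub] <;> ring
  have S1 : ∀ x ∈ t, ∑ y ∈ t, (if T.G.dist x y = 2 then Complex.normSq (v x) else 0)
      = ((q : ℝ) * q + q) * Complex.normSq (v x) := by
    intro x hx
    by_cases hvx : v x = 0
    · simp [hvx]
    · rw [← Finset.sum_filter, Finset.sum_const, hfull x (hsupp x hvx), T.sphere_two_card,
        nsmul_eq_mul]
      push_cast
      ring
  have S2 : ∀ y ∈ t, ∑ x ∈ t, (if T.G.dist x y = 2 then Complex.normSq (v y) else 0)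
      = ((q : ℝ) * q + q) * Complex.normSq (v y) := by
    intro y hy
    have : ∀ x ∈ t, (if T.G.dist x y = 2 then Complex.normSq (v y) else 0)
        = (if T.G.dist y x = 2 then Complex.normSq (v y) else 0) := by
      intro x _
      rw [SimpleGraph.dist_comm]
    rw [Finset.sum_congr rfl this]
    exact S1 y hy
  have S3 : ∑ x ∈ t, ∑ y ∈ t, (if T.G.dist x y = 2 then (v x * (starRingEnd ℂ) (v y)).re else 0)
      = ∑ x ∈ t, Complex.normSq (∑ y ∈ T.sphere x 1, v y)
        - ((q : ℝ) + 1) * ∑ x ∈ t, Complex.normSq (v x) := by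
    have hx3 : ∀ x ∈ t, ∑ y ∈ t, (if T.G.dist x y = 2 then (v x * (starRingEnd ℂ) (v y)).re else 0)
        = (v x * (starRingEnd ℂ) (∑ y ∈ T.sphere x 2, v y)).re := by
      intro x hx
      by_cases hvx : v x = 0
      · simp [hvx]
      · rw [← Finset.sum_filter, hfull x (hsupp x hvx), map_sum, Finset.mul_sum, Complex.re_sum]
    rw [Finset.sum_congr rfl hx3]
    have hx4 : ∀ x ∈ t, (v x * (starRingEnd ℂ) (∑ y ∈ T.sphere x 2, v y)).re
        = (∑ y ∈ T.sphere x 1, (v x * (starRingEnd ℂ) (∑ z ∈ T.sphere y 1, v z)).re)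
          - ((q : ℝ) + 1) * Complex.normSq (v x) := by
      intro x _
      rw [T.sum_sphere_two x v]
      rw [map_sub, map_sum, mul_sub, Finset.mul_sum]
      rw [Complex.sub_re, Complex.re_sum]
      congr 1
      rw [map_mul, ← mul_assoc, mul_comm (v x), mul_assoc, Complex.mul_conj]
      simp
    rw [Finset.sum_congr rfl hx4, Finset.sum_sub_distrib, ← Finset.mul_sum]
    congr 1
    have hswap := T.sum_sphere_swap t 1
      (fun x y => (v x * (starRingEnd ℂ) (∑ z ∈ T.sphere y 1, v z)).re)
      (fun x hx y hd hyn => by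
        have hvx : v x = 0 → _ := fun h => h
        by_cases hvx : v x = 0
        · simp [hvx]
        · exact absurd (ht2 x (hsupp x hvx) y (by omega)) hyn)
      (fun y hy x hd hxn => by simp [hv0 x hxn])
    rw [hswap]
    refine Finset.sum_congr rfl fun y _ => ?_
    rw [← Complex.re_sum, ← Finset.sum_mul, Complex.mul_conj, Complex.ofReal_re]
  calc ∑ x ∈ t, ∑ y ∈ t, (if T.G.dist x y = 2 then Complex.normSq (v x - v y) else 0)
      = ∑ x ∈ t, ∑ y ∈ t, ((if T.G.dist x y = 2 then Complex.normSq (v x) else 0)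
          + (if T.G.dist x y = 2 then Complex.normSq (v y) else 0)
          - 2 * (if T.G.dist x y = 2 then (v x * (starRingEnd ℂ) (v y)).re else 0)) := by
        refine Finset.sum_congr rfl fun x hx => Finset.sum_congr rfl fun y hy => ?_
        exact hsplit x hx y hy
    _ = (∑ x ∈ t, ((q : ℝ) * q + q) * Complex.normSq (v x))
          + (∑ x ∈ t, ∑ y ∈ t, (if T.G.dist x y = 2 then Complex.normSq (v y) else 0))
          - 2 * (∑ x ∈ t, ∑ y ∈ t, (if T.G.dist x y = 2 then (v x * (starRingEnd ℂ) (v y)).re else 0)) := by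
        simp only [Finset.sum_sub_distrib, Finset.sum_add_distrib, Finset.mul_sum]
        rw [Finset.sum_congr rfl S1]
    _ = 2 * ((q : ℝ) + 1) ^ 2 * ∑ x ∈ t, Complex.normSq (v x)
        - 2 * ∑ x ∈ t, Complex.normSq (∑ y ∈ T.sphere x 1, v y) := by
        rw [Finset.sum_comm (f := fun x y => if T.G.dist x y = 2 then Complex.normSq (v y) else 0)]
        rw [Finset.sum_congr rfl S2, S3, ← Finset.mul_sum]
        ring


lemma mem_ball_iff {x y : T.V} {n : ℕ} : y ∈ T.ball x n ↔ T.G.dist x y ≤ n :=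
  Set.Finite.mem_toFinset _

lemma qpow_neg_half (hq : 0 < q) :
    qpow q (-(1 : ℝ)/2) = ((Real.sqrt q)⁻¹ : ℝ) := by
  unfold qpow
  congr 1
  rw [neg_div, Real.rpow_neg (by positivity), Real.sqrt_eq_rpow]

lemma wave_eq_c {u : T.V → ℤ → ℂ} (hq : 0 < q) (hw : IsWaveSol T u) :
    ∀ (x : T.V) (n : ℤ),
      ∑ y ∈ T.sphere x 1, u y n = (Real.sqrt q : ℂ) * (u x (n + 1) + u x (n - 1)) := by
  intro x n
  have h := hw x n
  rw [HomTree.qpow_neg_half hq, Complex.ofReal_inv] at h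
  have hc : ((Real.sqrt q : ℝ) : ℂ) ≠ 0 := by
    simp only [ne_eq, Complex.ofReal_eq_zero]
    positivity
  rw [h, ← mul_assoc, mul_inv_cancel₀ hc, one_mul]

lemma supp_sum_finite (v : T.V → ℂ) (hv : (Function.support v).Finite) :
    (Function.support fun x => ∑ y ∈ T.sphere x 1, v y).Finite := by
  refine Set.Finite.subset (hv.biUnion (fun y _ => T.sphereFin y 1)) ?_
  intro x hx
  obtain ⟨y, hy, hvy⟩ := Finset.exists_ne_zero_of_sum_ne_zero hx
  rw [mem_sphere_iff] at hy
  exact Set.mem_biUnion hvy (by rw [Set.mem_setOf_eq, SimpleGraph.dist_comm]; exact hy)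

lemma supp_all {f g : T.V → ℂ} {u : T.V → ℤ → ℂ}
    (hf : (Function.support f).Finite) (hg : (Function.support g).Finite)
    (hu : IsCauchy T f g u) :
    ∀ n : ℤ, (Function.support fun x => u x n).Finite := by
  obtain ⟨hw, hf0, hg0⟩ := hu
  have h0 : (Function.support fun x => u x 0).Finite := by
    refine hf.subset fun x hx => ?_
    rw [Function.mem_support] at hx ⊢
    rw [← hf0 x]; exact hx
  have h1 : (Function.support fun x => u x 1).Finite := by
    refine ((hg.union (T.supp_sum_finite (fun y => u y 0) h0))).subset fun x hx => ?_
    rw [Function.mem_support] at hx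
    by_contra hnot
    simp only [Set.mem_union, Function.mem_support, not_or, not_not] at hnot
    have he := hw x 0
    rw [hnot.2, mul_zero] at he
    norm_num at he
    have hgx := hg0 x
    rw [hnot.1] at hgx
    have h2 : u x 1 - u x (-1) = 0 := by
      field_simp at hgx
      linear_combination hgx
    apply hx
    linear_combination (he + h2) / 2
  have hup : ∀ n : ℤ, (Function.support fun x => u x n).Finite →
      (Function.support fun x => u x (n + 1)).Finite →
      (Function.support fun x => u x (n + 2)).Finite := by
    intro n hn hn1
    refine (hn.union (T.supp_sum_finite (fun y => u y (n + 1)) hn1)).subset fun x hx => ?_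
    rw [Function.mem_support] at hx
    by_contra hnot
    simp only [Set.mem_union, Function.mem_support, not_or, not_not] at hnot
    have he := hw x (n + 1)
    rw [show n + 1 + 1 = n + 2 by ring, show n + 1 - 1 = n by ring] at he
    rw [hnot.2] at he
    rw [hnot.1, mul_zero] at he
    exact hx (by linear_combination he)
  have hdown : ∀ n : ℤ, (Function.support fun x => u x n).Finite →
      (Function.support fun x => u x (n + 1)).Finite →
      (Function.support fun x => u x (n - 1)).Finite := by
    intro n hn hn1
    refine (hn1.union (T.supp_sum_finite (fun y => u y n) hn)).subset fun x hx => ?_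
    rw [Function.mem_support] at hx
    by_contra hnot
    simp only [Set.mem_union, Function.mem_support, not_or, not_not] at hnot
    have he := hw x n
    rw [hnot.2] at he
    rw [hnot.1, mul_zero] at he
    exact hx (by linear_combination he)
  have key : ∀ n : ℤ, (Function.support fun x => u x n).Finite ∧
      (Function.support fun x => u x (n + 1)).Finite := by
    intro n
    induction n using Int.induction_on with
    | zero => exact ⟨h0, by norm_num; exact h1⟩
    | succ i ih =>
      refine ⟨ih.2, ?_⟩
      have := hup i ih.1 ih.2
      rwa [show (i : ℤ) + 2 = (i : ℤ) + 1 + 1 by ring] at this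
    | pred i ih =>
      constructor
      · have := hdown (-(i : ℤ)) ih.1 ih.2
        rwa [show -(i : ℤ) - 1 = -(i : ℤ) - 1 from rfl] at this
      · rw [show -(i : ℤ) - 1 + 1 = -(i : ℤ) by ring]
        exact ih.1
  exact fun n => (key n).1

lemma energy_eq {u : T.V → ℤ → ℂ} (hq : 0 < q)
    (heqc : ∀ (x : T.V) (n : ℤ),
      ∑ y ∈ T.sphere x 1, u y n = (Real.sqrt q : ℂ) * (u x (n + 1) + u x (n - 1)))
    (hfin : ∀ n : ℤ, (Function.support fun x => u x n).Finite) (m : ℤ) :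
    T.kinetic u m + T.potential u m
      = ∑' x : T.V, ((1/2) * Complex.normSq (u x m)
          - (1/2) * (u x (m + 1) * (starRingEnd ℂ) (u x (m - 1))).re) := by
  classical
  have hq0 : (q : ℝ) ≠ 0 := Nat.cast_ne_zero.mpr hq.ne'
  set s : Finset T.V :=
    (hfin (m - 1)).toFinset ∪ (hfin m).toFinset ∪ (hfin (m + 1)).toFinset with hs
  set t : Finset T.V := s.biUnion (fun x => T.ball x 2) with ht
  have hst : s ⊆ t := fun x hx =>
    Finset.mem_biUnion.mpr ⟨x, hx, T.mem_ball_iff.mpr (by rw [SimpleGraph.dist_self]; omega)⟩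
  have ht2 : ∀ x ∈ s, ∀ y, T.G.dist x y ≤ 2 → y ∈ t := fun x hx y hy =>
    Finset.mem_biUnion.mpr ⟨x, hx, T.mem_ball_iff.mpr hy⟩
  have hsupD : ∀ x : T.V, u x (m - 1) ≠ 0 → x ∈ s := fun x hx =>
    Finset.mem_union_left _ (Finset.mem_union_left _ ((hfin (m - 1)).mem_toFinset.mpr hx))
  have hsupA : ∀ x : T.V, u x m ≠ 0 → x ∈ s := fun x hx =>
    Finset.mem_union_left _ (Finset.mem_union_right _ ((hfin m).mem_toFinset.mpr hx))
  have hsupB : ∀ x : T.V, u x (m + 1) ≠ 0 → x ∈ s := fun x hx =>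
    Finset.mem_union_right _ ((hfin (m + 1)).mem_toFinset.mpr hx)
  have h0D : ∀ x : T.V, x ∉ t → u x (m - 1) = 0 := fun x hx => by
    by_contra h; exact hx (hst (hsupD x h))
  have h0A : ∀ x : T.V, x ∉ t → u x m = 0 := fun x hx => by
    by_contra h; exact hx (hst (hsupA x h))
  have h0B : ∀ x : T.V, x ∉ t → u x (m + 1) = 0 := fun x hx => by
    by_contra h; exact hx (hst (hsupB x h))
  have hK : T.kinetic u m
      = (1/8 : ℝ) * ∑ x ∈ t, Complex.normSq (u x (m + 1) - u x (m - 1)) := by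
    unfold kinetic
    rw [tsum_eq_sum (s := t) (fun x hx => by rw [h0B x hx, h0D x hx]; simp)]
    rw [Finset.mul_sum, Finset.mul_sum]
    refine Finset.sum_congr rfl fun x _ => ?_
    rw [Complex.sq_norm, Complex.normSq_div]
    norm_num [Complex.normSq_ofNat]
    ring
  have hPpair : (∑' p : T.V × T.V,
        (if T.G.dist p.1 p.2 = 2 then ‖(u p.1 m - u p.2 m) / 2‖ ^ 2 else 0))
      = ∑ p ∈ t ×ˢ t,
        (if T.G.dist p.1 p.2 = 2 then ‖(u p.1 m - u p.2 m) / 2‖ ^ 2 else 0) := by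
    refine tsum_eq_sum (fun p hp => ?_)
    by_cases hd : T.G.dist p.1 p.2 = 2
    · rw [if_pos hd]
      have hp1 : u p.1 m = 0 := by
        by_contra h
        exact hp (Finset.mem_product.mpr ⟨hst (hsupA _ h), ht2 _ (hsupA _ h) _ hd.le⟩)
      have hp2 : u p.2 m = 0 := by
        by_contra h
        refine hp (Finset.mem_product.mpr ⟨ht2 _ (hsupA _ h) _ ?_, hst (hsupA _ h)⟩)
        rw [SimpleGraph.dist_comm]; exact hd.le
      rw [hp1, hp2]
      simp
    · rw [if_neg hd]
  have hPn : (∑' x : T.V, ‖u x m‖ ^ 2) = ∑ x ∈ t, Complex.normSq (u x m) := by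
    rw [tsum_eq_sum (s := t) (fun x hx => by rw [h0A x hx]; simp)]
    exact Finset.sum_congr rfl fun x _ => Complex.sq_norm _
  have hpt : ∑ p ∈ t ×ˢ t,
        (if T.G.dist p.1 p.2 = 2 then ‖(u p.1 m - u p.2 m) / 2‖ ^ 2 else 0)
      = (1/4 : ℝ) * ∑ x ∈ t, ∑ y ∈ t,
          (if T.G.dist x y = 2 then Complex.normSq (u x m - u y m) else 0) := by
    rw [Finset.sum_product]
    rw [Finset.mul_sum]
    refine Finset.sum_congr rfl fun x _ => ?_
    rw [Finset.mul_sum]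
    refine Finset.sum_congr rfl fun y _ => ?_
    by_cases hd : T.G.dist x y = 2
    · rw [if_pos hd, if_pos hd, Complex.sq_norm, Complex.normSq_div]
      norm_num [Complex.normSq_ofNat]
      ring
    · rw [if_neg hd, if_neg hd, mul_zero]
  have hKI := T.key_identity hq (fun x => u x m) s t hsupA hst ht2
  have hSA : ∀ x ∈ t, Complex.normSq (∑ y ∈ T.sphere x 1, u y m)
      = (q : ℝ) * Complex.normSq (u x (m + 1) + u x (m - 1)) := by
    intro x _
    rw [heqc x m, Complex.normSq_mul, Complex.normSq_ofReal,
      Real.mul_self_sqrt (by positivity)]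
  rw [Finset.sum_congr rfl hSA, ← Finset.mul_sum] at hKI
  have hR : (∑' x : T.V, ((1/2) * Complex.normSq (u x m)
        - (1/2) * (u x (m + 1) * (starRingEnd ℂ) (u x (m - 1))).re))
      = ∑ x ∈ t, ((1/2) * Complex.normSq (u x m)
          - (1/2) * (u x (m + 1) * (starRingEnd ℂ) (u x (m - 1))).re) := by
    refine tsum_eq_sum (fun x hx => by rw [h0A x hx, h0B x hx, h0D x hx]; simp)
  unfold potential
  rw [hK, hPpair, hPn, hpt, hKI, hR]
  have h12 : ∑ x ∈ t, Complex.normSq (u x (m + 1) - u x (m - 1))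
      = ∑ x ∈ t, Complex.normSq (u x (m + 1) + u x (m - 1))
        - 4 * ∑ x ∈ t, (u x (m + 1) * (starRingEnd ℂ) (u x (m - 1))).re := by
    rw [Finset.mul_sum, ← Finset.sum_sub_distrib]
    refine Finset.sum_congr rfl fun x _ => ?_
    rw [Complex.normSq_sub, Complex.normSq_add]
    ring
  rw [h12, Finset.sum_sub_distrib, ← Finset.mul_sum, ← Finset.mul_sum]
  field_simp
  ring

lemma energy_step {u : T.V → ℤ → ℂ} (hq : 0 < q)
    (heqc : ∀ (x : T.V) (n : ℤ),
      ∑ y ∈ T.sphere x 1, u y n = (Real.sqrt q : ℂ) * (u x (n + 1) + u x (n - 1)))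
    (hfin : ∀ n : ℤ, (Function.support fun x => u x n).Finite) (m : ℤ) :
    T.kinetic u (m + 1) + T.potential u (m + 1) = T.kinetic u m + T.potential u m := by
  classical
  have hcR : Real.sqrt q ≠ 0 := by positivity
  have hc : ((Real.sqrt q : ℝ) : ℂ) ≠ 0 := Complex.ofReal_ne_zero.mpr hcR
  rw [T.energy_eq hq heqc hfin m, T.energy_eq hq heqc hfin (m + 1)]
  rw [show m + 1 + 1 = m + 2 by ring, show m + 1 - 1 = m by ring]
  set t : Finset T.V := ((hfin (m - 1)).toFinset ∪ (hfin m).toFinset)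
      ∪ ((hfin (m + 1)).toFinset ∪ (hfin (m + 2)).toFinset) with htdef
  have h0D : ∀ x : T.V, x ∉ t → u x (m - 1) = 0 := fun x hx => by
    by_contra h
    exact hx (Finset.mem_union_left _
      (Finset.mem_union_left _ ((hfin (m - 1)).mem_toFinset.mpr h)))
  have h0A : ∀ x : T.V, x ∉ t → u x m = 0 := fun x hx => by
    by_contra h
    exact hx (Finset.mem_union_left _
      (Finset.mem_union_right _ ((hfin m).mem_toFinset.mpr h)))
  have h0B : ∀ x : T.V, x ∉ t → u x (m + 1) = 0 := fun x hx => by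
    by_contra h
    exact hx (Finset.mem_union_right _
      (Finset.mem_union_left _ ((hfin (m + 1)).mem_toFinset.mpr h)))
  have h0E : ∀ x : T.V, x ∉ t → u x (m + 2) = 0 := fun x hx => by
    by_contra h
    exact hx (Finset.mem_union_right _
      (Finset.mem_union_right _ ((hfin (m + 2)).mem_toFinset.mpr h)))
  rw [tsum_eq_sum (s := t) (fun x hx => by rw [h0A x hx, h0B x hx, h0E x hx]; simp),
    tsum_eq_sum (s := t) (fun x hx => by rw [h0A x hx, h0B x hx, h0D x hx]; simp)]
  have hE2 : ∀ x : T.V, u x (m + 2)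
      = (((Real.sqrt q)⁻¹ : ℝ) : ℂ) * (∑ y ∈ T.sphere x 1, u y (m + 1)) - u x m := by
    intro x
    have h := heqc x (m + 1)
    rw [show m + 1 + 1 = m + 2 by ring, show m + 1 - 1 = m by ring] at h
    rw [h, Complex.ofReal_inv, ← mul_assoc, inv_mul_cancel₀ hc, one_mul]
    ring
  have hD : ∀ x : T.V, u x (m - 1)
      = (((Real.sqrt q)⁻¹ : ℝ) : ℂ) * (∑ y ∈ T.sphere x 1, u y m) - u x (m + 1) := by
    intro x
    have h := heqc x m
    rw [h, Complex.ofReal_inv, ← mul_assoc, inv_mul_cancel₀ hc, one_mul]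
    ring
  have hL : ∀ x ∈ t, (1/2) * Complex.normSq (u x (m + 1))
        - (1/2) * (u x (m + 2) * (starRingEnd ℂ) (u x m)).re
      = ((1/2) * Complex.normSq (u x (m + 1)) + (1/2) * Complex.normSq (u x m))
        - ((1/2) * (Real.sqrt q)⁻¹)
          * ((∑ y ∈ T.sphere x 1, u y (m + 1)) * (starRingEnd ℂ) (u x m)).re := by
    intro x _
    have hre : u x (m + 2) * (starRingEnd ℂ) (u x m)
        = (((Real.sqrt q)⁻¹ : ℝ) : ℂ)
            * ((∑ y ∈ T.sphere x 1, u y (m + 1)) * (starRingEnd ℂ) (u x m))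
          - u x m * (starRingEnd ℂ) (u x m) := by
      rw [hE2 x]; ring
    rw [hre, Complex.sub_re, Complex.mul_conj, Complex.ofReal_re, Complex.re_ofReal_mul]
    ring
  have hRt : ∀ x ∈ t, (1/2) * Complex.normSq (u x m)
        - (1/2) * (u x (m + 1) * (starRingEnd ℂ) (u x (m - 1))).re
      = ((1/2) * Complex.normSq (u x (m + 1)) + (1/2) * Complex.normSq (u x m))
        - ((1/2) * (Real.sqrt q)⁻¹)
          * (∑ y ∈ T.sphere x 1, (u x (m + 1) * (starRingEnd ℂ) (u y m)).re) := by
    intro x _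
    have hre : u x (m + 1) * (starRingEnd ℂ) (u x (m - 1))
        = (((Real.sqrt q)⁻¹ : ℝ) : ℂ)
            * (u x (m + 1) * (starRingEnd ℂ) (∑ y ∈ T.sphere x 1, u y m))
          - u x (m + 1) * (starRingEnd ℂ) (u x (m + 1)) := by
      rw [hD x, map_sub, map_mul, Complex.conj_ofReal]
      ring
    have hre2 : (u x (m + 1) * (starRingEnd ℂ) (∑ y ∈ T.sphere x 1, u y m)).re
        = ∑ y ∈ T.sphere x 1, (u x (m + 1) * (starRingEnd ℂ) (u y m)).re := by
      rw [map_sum, Finset.mul_sum, Complex.re_sum]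
    rw [hre, Complex.sub_re, Complex.mul_conj, Complex.ofReal_re, Complex.re_ofReal_mul,
      hre2]
    ring
  rw [Finset.sum_congr rfl hL, Finset.sum_congr rfl hRt,
    Finset.sum_sub_distrib, Finset.sum_sub_distrib, ← Finset.mul_sum, ← Finset.mul_sum]
  congr 1
  have hsw := T.sum_sphere_swap t 1
    (fun x y => (u y (m + 1) * (starRingEnd ℂ) (u x m)).re)
    (fun x hx y hd hyn => by simp [h0B y hyn])
    (fun y hy x hd hxn => by simp [h0A x hxn])
  congr 1
  calc ∑ x ∈ t, ((∑ y ∈ T.sphere x 1, u y (m + 1)) * (starRingEnd ℂ) (u x m)).re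
      = ∑ x ∈ t, ∑ y ∈ T.sphere x 1, (u y (m + 1) * (starRingEnd ℂ) (u x m)).re := by
        refine Finset.sum_congr rfl fun x _ => ?_
        rw [Finset.sum_mul, Complex.re_sum]
    _ = ∑ y ∈ t, ∑ x ∈ T.sphere y 1, (u y (m + 1) * (starRingEnd ℂ) (u x m)).re := by
        simpa using hsw
    _ = ∑ x ∈ t, ∑ y ∈ T.sphere x 1, (u x (m + 1) * (starRingEnd ℂ) (u y m)).re := rfl

end HomTree




open HomTree in
/-- conservation of the total energy. -/
theorem stmt16 {q : ℕ} (hq : 2 ≤ q) (T : HomTree q) (f g : T.V → ℂ)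
    (hf : (Function.support f).Finite) (hg : (Function.support g).Finite)
    (u : T.V → ℤ → ℂ) (hu : HomTree.IsCauchy T f g u) :
    ∀ n : ℤ, T.kinetic u n + T.potential u n = T.kinetic u 0 + T.potential u 0 := by
  have hq0 : 0 < q := by omega
  have hfin := T.supp_all hf hg hu
  have heqc := T.wave_eq_c hq0 hu.1
  intro n
  induction n using Int.induction_on with
  | zero => rfl
  | succ i ih => rw [T.energy_step hq0 heqc hfin i]; exact ih
  | pred i ih =>
    have h := T.energy_step hq0 heqc hfin (-(i : ℤ) - 1)
    rw [show -(i : ℤ) - 1 + 1 = -(i : ℤ) by ring] at h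
    rw [← h]; exact ih
end
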